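/- Convergence of Soft-Impute: for λ > 0, the sequence Z^0 = 0, Z^{k+1} = S_λ(P_Ω(X) + P_Ω^⊥(Z^k)) converges to a matrix Z∞ that minimizes f_λ(Z) = (1/2)‖P_Ω(Z) − P_Ω(X)‖_F² + λ‖Z‖_* over all m×n matrices Z. -/

import Mathlib

open Matrix BigOperators Finset

noncomputable section

/-- Squared Frobenius norm of a real matrix. -/
def frobSq {m n : ℕ} (A : Matrix (Fin m) (Fin n) ℝ) : ℝ :=
  ∑ i, ∑ j, (A i j) ^ 2

/-- Frobenius norm. -/
def frobNorm {m n : ℕ} (A : Matrix (Fin m) (Fin n) ℝ) : ℝ :=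
  Real.sqrt (frobSq A)

/-- The singular values of `A`, as square roots of the eigenvalues of `Aᴴ * A`. -/
def singVals {m n : ℕ} (A : Matrix (Fin m) (Fin n) ℝ) : Fin n → ℝ :=
  fun i => Real.sqrt ((show (Aᵀ * A).IsHermitian by
    simpa using Matrix.isHermitian_conjTranspose_mul_self A).eigenvalues i)

/-- Nuclear norm: the sum of the singular values. -/
def nnorm {m n : ℕ} (A : Matrix (Fin m) (Fin n) ℝ) : ℝ :=
  ∑ i, singVals A i

/-- Spectral norm: the largest singular value. -/
def specNorm {m n : ℕ} (A : Matrix (Fin m) (Fin n) ℝ) : ℝ :=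
  ⨆ i, singVals A i

/-- Projection onto the observed entries `Ω`. -/
def pO {m n : ℕ} (Ω : Finset (Fin m × Fin n)) (Y : Matrix (Fin m) (Fin n) ℝ) :
    Matrix (Fin m) (Fin n) ℝ :=
  fun i j => if (i, j) ∈ Ω then Y i j else 0

/-- Complementary projection `P_Ω^⊥ = I - P_Ω`. -/
def pOc {m n : ℕ} (Ω : Finset (Fin m × Fin n)) (Y : Matrix (Fin m) (Fin n) ℝ) :
    Matrix (Fin m) (Fin n) ℝ :=
  Y - pO Ω Y

/-- The objective `f_λ(Z) = ½‖P_Ω(Z) - P_Ω(X)‖_F² + λ‖Z‖_*`. -/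
def fObj {m n : ℕ} (Ω : Finset (Fin m × Fin n)) (X : Matrix (Fin m) (Fin n) ℝ) (lam : ℝ)
    (Z : Matrix (Fin m) (Fin n) ℝ) : ℝ :=
  (1 / 2) * frobSq (pO Ω Z - pO Ω X) + lam * nnorm Z

/-- The surrogate `Q_λ(Z | Z̃) = ½‖P_Ω(X) + P_Ω^⊥(Z̃) - Z‖_F² + λ‖Z‖_*`. -/
def qObj {m n : ℕ} (Ω : Finset (Fin m × Fin n)) (X : Matrix (Fin m) (Fin n) ℝ) (lam : ℝ)
    (Z Zt : Matrix (Fin m) (Fin n) ℝ) : ℝ :=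
  (1 / 2) * frobSq (pO Ω X + pOc Ω Zt - Z) + lam * nnorm Z

/-- `IsSVD W U d V` : `W = U D Vᵀ` is a thin SVD of `W` with strictly positive
singular values `d` and orthonormal columns in `U` and `V`. -/
def IsSVD {m n r : ℕ} (W : Matrix (Fin m) (Fin n) ℝ) (U : Matrix (Fin m) (Fin r) ℝ)
    (d : Fin r → ℝ) (V : Matrix (Fin n) (Fin r) ℝ) : Prop :=
  Uᵀ * U = 1 ∧ Vᵀ * V = 1 ∧ (∀ i, 0 < d i) ∧ W = U * Matrix.diagonal d * Vᵀ

/-- Trace inner product `⟨A, B⟩ = tr(AᵀB)`. -/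
def minner {m n : ℕ} (A B : Matrix (Fin m) (Fin n) ℝ) : ℝ :=
  ∑ i, ∑ j, A i j * B i j

/-- `G` is a subgradient of the nuclear norm at `Z`. -/
def NucSubgrad {m n : ℕ} (Z G : Matrix (Fin m) (Fin n) ℝ) : Prop :=
  ∀ Y, nnorm Z + minner G (Y - Z) ≤ nnorm Y

end
noncomputable section
namespace SoftImpute
open Matrix BigOperators Finset

variable {m n r : ℕ}

lemma frobSq_nonneg (A : Matrix (Fin m) (Fin n) ℝ) : 0 ≤ frobSq A :=
  Finset.sum_nonneg fun i _ => Finset.sum_nonneg fun j _ => sq_nonneg _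

lemma frobSq_eq_zero {A : Matrix (Fin m) (Fin n) ℝ} (h : frobSq A = 0) : A = 0 := by
  ext i j
  have h1 : ∀ i ∈ (univ : Finset (Fin m)), (0:ℝ) ≤ ∑ j, (A i j)^2 :=
    fun i _ => Finset.sum_nonneg fun j _ => sq_nonneg _
  have h2 := (Finset.sum_eq_zero_iff_of_nonneg h1).mp h i (mem_univ i)
  have h3 := (Finset.sum_eq_zero_iff_of_nonneg (fun j _ => sq_nonneg (A i j))).mp h2 j (mem_univ j)
  simpa using pow_eq_zero_iff (n := 2) (by norm_num) |>.mp h3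

lemma frobSq_sub (A B : Matrix (Fin m) (Fin n) ℝ) :
    frobSq (A - B) = frobSq A - 2 * minner A B + frobSq B := by
  simp only [frobSq, minner, Matrix.sub_apply]
  rw [Finset.mul_sum, ← Finset.sum_sub_distrib, ← Finset.sum_add_distrib]
  refine Finset.sum_congr rfl fun i _ => ?_
  rw [Finset.mul_sum, ← Finset.sum_sub_distrib, ← Finset.sum_add_distrib]
  refine Finset.sum_congr rfl fun j _ => ?_
  ring

lemma minner_sub_right (A B C : Matrix (Fin m) (Fin n) ℝ) :
    minner A (B - C) = minner A B - minner A C := by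
  simp only [minner, Matrix.sub_apply, mul_sub, Finset.sum_sub_distrib]

lemma frobSq_neg (A : Matrix (Fin m) (Fin n) ℝ) : frobSq (-A) = frobSq A := by
  simp [frobSq]

lemma frobSq_eq_trace (A : Matrix (Fin m) (Fin n) ℝ) : frobSq A = (Aᵀ * A).trace := by
  simp only [Matrix.trace, Matrix.diag, Matrix.mul_apply, Matrix.transpose_apply, frobSq, sq]
  rw [Finset.sum_comm]

lemma minner_eq_trace (A B : Matrix (Fin m) (Fin n) ℝ) : minner A B = (Aᵀ * B).trace := by
  simp only [Matrix.trace, Matrix.diag, Matrix.mul_apply, Matrix.transpose_apply, minner]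
  rw [Finset.sum_comm]

end SoftImpute

noncomputable section
namespace SoftImpute
open Matrix BigOperators Finset
open scoped MatrixOrder

variable {m n r : ℕ}

lemma frobSq_eq_trace' (A : Matrix (Fin m) (Fin n) ℝ) : frobSq A = (Aᴴ * A).trace := by
  rw [conjTranspose_eq_transpose_of_trivial, frobSq_eq_trace]

lemma trace_sqrt_eq {M : Matrix (Fin n) (Fin n) ℝ} (hM : PosSemidef M) :
    (CFC.sqrt M).trace = ∑ i, Real.sqrt (hM.1.eigenvalues i) := by
  rw [CFC.sqrt_eq_cfc, cfc_nnreal_eq_real _ M hM.nonneg, hM.1.cfc_eq, IsHermitian.cfc,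
    Unitary.conjStarAlgAut_apply]
  rw [Matrix.trace_mul_comm (hM.1.eigenvectorUnitary.1 * _) (star hM.1.eigenvectorUnitary.1),
    ← Matrix.mul_assoc]
  have h1 : star hM.1.eigenvectorUnitary.1 * hM.1.eigenvectorUnitary.1 = 1 :=
    Unitary.coe_star_mul_self hM.1.eigenvectorUnitary
  rw [h1, one_mul, Matrix.trace_diagonal]
  refine Finset.sum_congr rfl fun i _ => ?_
  simp [Real.coe_sqrt, Real.coe_toNNReal', max_eq_left (hM.eigenvalues_nonneg i)]

lemma nnorm_eq_trace_sqrt (A : Matrix (Fin m) (Fin n) ℝ) :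
    nnorm A = (CFC.sqrt (Aᴴ * A)).trace := by
  rw [trace_sqrt_eq (posSemidef_conjTranspose_mul_self A)]; rfl

lemma trace_eq_sum_eigenvalues {M : Matrix (Fin n) (Fin n) ℝ} (hM : IsHermitian M) :
    M.trace = ∑ i, hM.eigenvalues i := by
  conv_lhs => rw [hM.spectral_theorem, Unitary.conjStarAlgAut_apply]
  rw [Matrix.trace_mul_comm, ← Matrix.mul_assoc]
  have h1 : star hM.eigenvectorUnitary.1 * hM.eigenvectorUnitary.1 = 1 :=
    Unitary.coe_star_mul_self hM.eigenvectorUnitary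
  rw [h1, one_mul, Matrix.trace_diagonal]
  rfl

lemma singVals_nonneg (A : Matrix (Fin m) (Fin n) ℝ) (i : Fin n) : 0 ≤ singVals A i :=
  Real.sqrt_nonneg _

lemma nnorm_nonneg (A : Matrix (Fin m) (Fin n) ℝ) : 0 ≤ nnorm A :=
  Finset.sum_nonneg fun i _ => singVals_nonneg A i

lemma frobSq_eq_sum_singVals_sq (A : Matrix (Fin m) (Fin n) ℝ) :
    frobSq A = ∑ i, singVals A i ^ 2 := by
  rw [frobSq_eq_trace', trace_eq_sum_eigenvalues (isHermitian_conjTranspose_mul_self A)]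
  refine Finset.sum_congr rfl fun i _ => ?_
  rw [singVals]; exact (Real.sq_sqrt ((posSemidef_conjTranspose_mul_self A).eigenvalues_nonneg i)).symm

lemma frobSq_le_nnorm_sq (A : Matrix (Fin m) (Fin n) ℝ) : frobSq A ≤ nnorm A ^ 2 := by
  rw [frobSq_eq_sum_singVals_sq, nnorm, sq, Finset.sum_mul]
  refine Finset.sum_le_sum fun i _ => ?_
  rw [sq]
  exact mul_le_mul_of_nonneg_left
    (Finset.single_le_sum (fun j _ => singVals_nonneg A j) (mem_univ i)) (singVals_nonneg A i)

lemma nnorm_UdV (U : Matrix (Fin m) (Fin r) ℝ) (d : Fin r → ℝ) (V : Matrix (Fin n) (Fin r) ℝ)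
    (hU : Uᵀ * U = 1) (hV : Vᵀ * V = 1) (hd : ∀ i, 0 ≤ d i) :
    nnorm (U * Matrix.diagonal d * Vᵀ) = ∑ i, d i := by
  set S := U * Matrix.diagonal d * Vᵀ with hS
  have hSS : Sᴴ * S = V * (Matrix.diagonal (fun i => d i * d i) * Vᵀ) := by
    rw [hS, conjTranspose_eq_transpose_of_trivial, Matrix.transpose_mul, Matrix.transpose_mul,
      Matrix.transpose_transpose, Matrix.diagonal_transpose]
    simp only [Matrix.mul_assoc]
    rw [← Matrix.mul_assoc Uᵀ U, hU, Matrix.one_mul,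
      ← Matrix.mul_assoc (Matrix.diagonal d), Matrix.diagonal_mul_diagonal]
  have hB : PosSemidef (V * (Matrix.diagonal d * Vᵀ)) := by
    have heq : (V * Matrix.diagonal (fun i => Real.sqrt (d i))) *
        (V * Matrix.diagonal (fun i => Real.sqrt (d i)))ᴴ =
        V * (Matrix.diagonal d * Vᵀ) := by
      rw [conjTranspose_mul, Matrix.diagonal_conjTranspose,
        conjTranspose_eq_transpose_of_trivial]
      simp only [Matrix.mul_assoc, star_trivial]
      rw [← Matrix.mul_assoc (Matrix.diagonal _) (Matrix.diagonal _),
        Matrix.diagonal_mul_diagonal]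
      rw [show (fun i => Real.sqrt (d i) * Real.sqrt (d i)) = d from
        funext fun i => Real.mul_self_sqrt (hd i)]
    rw [← heq]
    exact posSemidef_self_mul_conjTranspose _
  have hsq : (V * (Matrix.diagonal d * Vᵀ)) ^ 2 = Sᴴ * S := by
    rw [hSS, pow_two]
    simp only [Matrix.mul_assoc]
    rw [← Matrix.mul_assoc Vᵀ V, hV, Matrix.one_mul,
      ← Matrix.mul_assoc (Matrix.diagonal d), Matrix.diagonal_mul_diagonal]
  have hBS : V * (Matrix.diagonal d * Vᵀ) = CFC.sqrt (Sᴴ * S) :=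
    ((CFC.sqrt_eq_iff _ _ (posSemidef_conjTranspose_mul_self S).nonneg hB.nonneg).mpr
      (by rw [← sq]; exact hsq)).symm
  rw [nnorm_eq_trace_sqrt, ← hBS, Matrix.trace_mul_comm, Matrix.mul_assoc, hV, Matrix.mul_one,
    Matrix.trace_diagonal]

end SoftImpute

noncomputable section
namespace SoftImpute
open Matrix BigOperators Finset

variable {m n r : ℕ}

lemma posSemidef_tmul (A : Matrix (Fin m) (Fin n) ℝ) : PosSemidef (Aᵀ * A) := by
  have := posSemidef_conjTranspose_mul_self A
  rwa [conjTranspose_eq_transpose_of_trivial] at this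

lemma exists_svd (W : Matrix (Fin m) (Fin n) ℝ) :
    ∃ (r : ℕ) (U : Matrix (Fin m) (Fin r) ℝ) (d : Fin r → ℝ) (V : Matrix (Fin n) (Fin r) ℝ),
      IsSVD W U d V := by
  classical
  set M := Wᵀ * W with hMdef
  have hM : PosSemidef M := posSemidef_tmul W
  have hH : IsHermitian M := hM.1
  have hMt : Mᵀ = M := by
    have := hH.eq
    rwa [conjTranspose_eq_transpose_of_trivial] at this
  set μ := hH.eigenvalues with hμdef
  have hμ0 : ∀ i, 0 ≤ μ i := fun i => hM.eigenvalues_nonneg i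
  set Q : Matrix (Fin n) (Fin n) ℝ := hH.eigenvectorUnitary.1 with hQdef
  have hQQ : Qᵀ * Q = 1 := by
    have := Unitary.coe_star_mul_self hH.eigenvectorUnitary
    rwa [Matrix.star_eq_conjTranspose, conjTranspose_eq_transpose_of_trivial] at this
  have hspec : M = Q * Matrix.diagonal μ * Qᵀ := by
    have := hH.spectral_theorem
    rwa [Unitary.conjStarAlgAut_apply, Matrix.star_eq_conjTranspose,
      conjTranspose_eq_transpose_of_trivial,
      show (RCLike.ofReal ∘ μ : Fin n → ℝ) = μ from funext fun i => rfl] at this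
  have hMQ : M * Q = Q * Matrix.diagonal μ := by
    rw [hspec, Matrix.mul_assoc, Matrix.mul_assoc, hQQ, Matrix.mul_one]
  set s : Finset (Fin n) := univ.filter (fun i => 0 < μ i) with hsdef
  set r : ℕ := s.card with hrdef
  set e : Fin r ≃o {x // x ∈ s} := s.orderIsoOfFin rfl with hedef
  set emb : Fin r → Fin n := fun j => (e j).1 with hembdef
  have hemb_inj : Function.Injective emb := fun a b hab => by
    apply e.injective; exact Subtype.ext hab
  have hemb_mem : ∀ j, emb j ∈ s := fun j => (e j).2
  have hμpos : ∀ j, 0 < μ (emb j) := fun j => (Finset.mem_filter.mp (hemb_mem j)).2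
  set d : Fin r → ℝ := fun j => Real.sqrt (μ (emb j)) with hddef
  have hdpos : ∀ j, 0 < d j := fun j => Real.sqrt_pos.mpr (hμpos j)
  set V : Matrix (Fin n) (Fin r) ℝ := Matrix.of (fun i j => Q i (emb j)) with hVdef
  set U : Matrix (Fin m) (Fin r) ℝ := W * V * Matrix.diagonal (fun j => (d j)⁻¹) with hUdef
  set D' : Matrix (Fin r) (Fin r) ℝ := Matrix.diagonal (fun j => μ (emb j)) with hD'def
  -- V has orthonormal columns
  have hVV : Vᵀ * V = 1 := by
    ext j k
    have h1 : (Qᵀ * Q) (emb j) (emb k) = (1 : Matrix (Fin n) (Fin n) ℝ) (emb j) (emb k) := by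
      rw [hQQ]
    rw [Matrix.mul_apply] at h1
    simp only [Matrix.transpose_apply] at h1
    rw [Matrix.mul_apply]
    simp only [Matrix.transpose_apply, hVdef, Matrix.of_apply]
    rw [h1, Matrix.one_apply, Matrix.one_apply]
    by_cases h : j = k
    · simp [h]
    · rw [if_neg h, if_neg (fun hc => h (hemb_inj hc))]
  -- M V = V D'
  have hMV : M * V = V * D' := by
    ext i j
    have h1 : (M * Q) i (emb j) = (Q * Matrix.diagonal μ) i (emb j) := by rw [hMQ]
    rw [Matrix.mul_apply, Matrix.mul_diagonal] at h1
    rw [Matrix.mul_apply, hD'def, Matrix.mul_diagonal]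
    simp only [hVdef, Matrix.of_apply]
    exact h1
  have hVM : Vᵀ * M = D' * Vᵀ := by
    have h2 : Vᵀ * Mᵀ = D'ᵀ * Vᵀ := by
      rw [← Matrix.transpose_mul, ← Matrix.transpose_mul, hMV]
    rwa [hMt, show D'ᵀ = D' by rw [hD'def, Matrix.diagonal_transpose]] at h2
  -- U has orthonormal columns
  have hUU : Uᵀ * U = 1 := by
    rw [hUdef, Matrix.transpose_mul, Matrix.transpose_mul, Matrix.diagonal_transpose]
    simp only [Matrix.mul_assoc]
    rw [← Matrix.mul_assoc Wᵀ W, ← hMdef, ← Matrix.mul_assoc M V, hMV]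
    simp only [Matrix.mul_assoc]
    rw [← Matrix.mul_assoc Vᵀ V, hVV, Matrix.one_mul, hD'def,
      Matrix.diagonal_mul_diagonal, Matrix.diagonal_mul_diagonal]
    have hone : (fun j => (d j)⁻¹ * (μ (emb j) * (d j)⁻¹)) = fun _ => (1:ℝ) := by
      funext j
      have h1 : d j * d j = μ (emb j) := Real.mul_self_sqrt (le_of_lt (hμpos j))
      have hd0 : d j ≠ 0 := ne_of_gt (hdpos j)
      field_simp
      linarith [h1]
    rw [hone, Matrix.diagonal_one]
  -- W = U diag d Vᵀ
  have hUdV : U * Matrix.diagonal d * Vᵀ = W * (V * Vᵀ) := by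
    rw [hUdef]
    simp only [Matrix.mul_assoc]
    rw [← Matrix.mul_assoc (Matrix.diagonal fun j => (d j)⁻¹) (Matrix.diagonal d),
      Matrix.diagonal_mul_diagonal,
      show (fun j => (d j)⁻¹ * d j) = fun _ => (1:ℝ) from
        funext fun j => inv_mul_cancel₀ (ne_of_gt (hdpos j)),
      Matrix.diagonal_one, Matrix.one_mul]
  set P : Matrix (Fin n) (Fin n) ℝ := V * Vᵀ with hPdef
  have hMP : M * P = V * (D' * Vᵀ) := by
    rw [hPdef, ← Matrix.mul_assoc M V, hMV, Matrix.mul_assoc]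
  have hPM : P * M = V * (D' * Vᵀ) := by
    rw [hPdef, Matrix.mul_assoc, hVM, ← Matrix.mul_assoc]
  have hPMP : P * (M * P) = V * (D' * Vᵀ) := by
    rw [hMP, hPdef, Matrix.mul_assoc, ← Matrix.mul_assoc Vᵀ V, hVV, Matrix.one_mul]
  have htr : (V * (D' * Vᵀ)).trace = ∑ j, μ (emb j) := by
    rw [Matrix.trace_mul_comm, Matrix.mul_assoc, hVV, Matrix.mul_one, hD'def,
      Matrix.trace_diagonal]
  have hsum : ∑ j : Fin r, μ (emb j) = ∑ i ∈ s, μ i := by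
    rw [← Finset.sum_coe_sort s μ]
    exact Fintype.sum_equiv e.toEquiv _ _ fun j => rfl
  have htrM : M.trace = ∑ i, μ i := trace_eq_sum_eigenvalues hH
  -- the residual is zero
  set C : Matrix (Fin m) (Fin n) ℝ := W - W * P with hCdef
  have hCt : Cᵀ = Wᵀ - P * Wᵀ := by
    rw [hCdef, Matrix.transpose_sub, Matrix.transpose_mul, hPdef, Matrix.transpose_mul,
      Matrix.transpose_transpose, ← hPdef]
  have hfrob : frobSq C = 0 := by
    rw [frobSq_eq_trace, hCt, hCdef]
    rw [Matrix.sub_mul, Matrix.mul_sub, Matrix.mul_sub]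
    rw [Matrix.trace_sub, Matrix.trace_sub, Matrix.trace_sub]
    have e1 : Wᵀ * (W * P) = V * (D' * Vᵀ) := by rw [← Matrix.mul_assoc, ← hMdef, hMP]
    have e2 : P * Wᵀ * W = V * (D' * Vᵀ) := by rw [Matrix.mul_assoc, ← hMdef, hPM]
    have e3 : P * Wᵀ * (W * P) = V * (D' * Vᵀ) := by
      rw [Matrix.mul_assoc, ← Matrix.mul_assoc Wᵀ W, ← hMdef, hPMP]
    rw [e1, e2, e3, ← hMdef, htr, htrM, hsum]
    have : ∑ i, μ i = ∑ i ∈ s, μ i + ∑ i ∈ univ.filter (fun i => ¬ 0 < μ i), μ i := by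
      rw [hsdef, Finset.sum_filter_add_sum_filter_not]
    rw [this]
    have hz : ∑ i ∈ univ.filter (fun i => ¬ 0 < μ i), μ i = 0 := by
      refine Finset.sum_eq_zero fun i hi => ?_
      have := (Finset.mem_filter.mp hi).2
      exact le_antisymm (not_lt.mp this) (hμ0 i)
    rw [hz]
    ring
  have hC0 : C = 0 := frobSq_eq_zero hfrob
  have hWfinal : W = U * Matrix.diagonal d * Vᵀ := by
    rw [hUdV]
    have := sub_eq_zero.mp hC0
    rw [hPdef] at this
    exact this
  exact ⟨r, U, d, V, hUU, hVV, hdpos, hWfinal⟩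

end SoftImpute

noncomputable section
namespace SoftImpute
open Matrix BigOperators Finset

variable {m n r r' : ℕ} {lam : ℝ}

lemma minner_UdV_pair (U : Matrix (Fin m) (Fin r) ℝ) (a b : Fin r → ℝ)
    (V : Matrix (Fin n) (Fin r) ℝ) (hU : Uᵀ * U = 1) (hV : Vᵀ * V = 1) :
    minner (U * Matrix.diagonal a * Vᵀ) (U * Matrix.diagonal b * Vᵀ) = ∑ i, a i * b i := by
  rw [minner_eq_trace, Matrix.transpose_mul, Matrix.transpose_mul, Matrix.transpose_transpose,
    Matrix.diagonal_transpose]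
  simp only [Matrix.mul_assoc]
  rw [← Matrix.mul_assoc Uᵀ U, hU, Matrix.one_mul,
    ← Matrix.mul_assoc (Matrix.diagonal a), Matrix.diagonal_mul_diagonal,
    Matrix.trace_mul_comm, Matrix.mul_assoc, hV, Matrix.mul_one, Matrix.trace_diagonal]

lemma col_sq_sum_le (U : Matrix (Fin m) (Fin r) ℝ) (hU : Uᵀ * U = 1)
    (A : Matrix (Fin m) (Fin r') ℝ) (hA : Aᵀ * A = 1) (j : Fin r') :
    ∑ i, ((Uᵀ * A) i j) ^ 2 ≤ 1 := by
  set B := Uᵀ * A with hBdef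
  set C := A - U * B with hCdef
  have hCt : Cᵀ = Aᵀ - Bᵀ * Uᵀ := by
    rw [hCdef, Matrix.transpose_sub, Matrix.transpose_mul]
  have hkey : Bᵀ * B = Aᵀ * A - Cᵀ * C := by
    rw [hCt, hCdef, Matrix.sub_mul, Matrix.mul_sub, Matrix.mul_sub]
    have e1 : Aᵀ * (U * B) = Bᵀ * B := by
      rw [← Matrix.mul_assoc, show Aᵀ * U = Bᵀ by
        rw [hBdef, Matrix.transpose_mul, Matrix.transpose_transpose]]
    have e2 : Bᵀ * Uᵀ * A = Bᵀ * B := by rw [Matrix.mul_assoc, ← hBdef]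
    have e3 : Bᵀ * Uᵀ * (U * B) = Bᵀ * B := by
      rw [Matrix.mul_assoc, ← Matrix.mul_assoc Uᵀ U, hU, Matrix.one_mul]
    rw [e1, e2, e3]
    abel
  have h1 : (Bᵀ * B) j j = ∑ i, (B i j) ^ 2 := by
    rw [Matrix.mul_apply]
    exact Finset.sum_congr rfl fun i _ => by rw [Matrix.transpose_apply, sq]
  have h2 : (Aᵀ * A) j j = 1 := by rw [hA, Matrix.one_apply_eq]
  have h3 : 0 ≤ (Cᵀ * C) j j := by
    rw [Matrix.mul_apply]
    exact Finset.sum_nonneg fun i _ => by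
      rw [Matrix.transpose_apply, ← sq]; exact sq_nonneg _
  have h4 := congrFun (congrFun hkey j) j
  simp only [Matrix.sub_apply] at h4
  rw [← h1]
  rw [h4, h2]
  linarith

lemma minner_expand (U : Matrix (Fin m) (Fin r) ℝ) (g : Fin r → ℝ)
    (V : Matrix (Fin n) (Fin r) ℝ) (A : Matrix (Fin m) (Fin r') ℝ) (σ : Fin r' → ℝ)
    (B : Matrix (Fin n) (Fin r') ℝ) :
    minner (U * Matrix.diagonal g * Vᵀ) (A * Matrix.diagonal σ * Bᵀ) =
      ∑ p, ∑ q, g p * σ q * ((Uᵀ * A) p q) * ((Vᵀ * B) p q) := by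
  have hentry : ∀ {k : ℕ} (M : Matrix (Fin m) (Fin k) ℝ) (w : Fin k → ℝ)
      (N : Matrix (Fin n) (Fin k) ℝ) (i : Fin m) (j : Fin n),
      (M * Matrix.diagonal w * Nᵀ) i j = ∑ p, M i p * w p * N j p := by
    intro k M w N i j
    rw [Matrix.mul_apply]
    refine Finset.sum_congr rfl fun p _ => ?_
    rw [Matrix.mul_diagonal, Matrix.transpose_apply]
  simp only [minner, hentry]
  calc ∑ i, ∑ j, (∑ p, U i p * g p * V j p) * (∑ q, A i q * σ q * B j q)
      = ∑ i, ∑ j, ∑ p, ∑ q, (U i p * g p * V j p) * (A i q * σ q * B j q) := by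
        refine Finset.sum_congr rfl fun i _ => Finset.sum_congr rfl fun j _ => ?_
        rw [Finset.sum_mul_sum]
    _ = ∑ i, ∑ p, ∑ j, ∑ q, (U i p * g p * V j p) * (A i q * σ q * B j q) := by
        exact Finset.sum_congr rfl fun i _ => Finset.sum_comm
    _ = ∑ p, ∑ i, ∑ j, ∑ q, (U i p * g p * V j p) * (A i q * σ q * B j q) :=
        Finset.sum_comm
    _ = ∑ p, ∑ i, ∑ q, ∑ j, (U i p * g p * V j p) * (A i q * σ q * B j q) := by
        exact Finset.sum_congr rfl fun p _ => Finset.sum_congr rfl fun i _ => Finset.sum_comm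
    _ = ∑ p, ∑ q, ∑ i, ∑ j, (U i p * g p * V j p) * (A i q * σ q * B j q) := by
        exact Finset.sum_congr rfl fun p _ => Finset.sum_comm
    _ = ∑ p, ∑ q, g p * σ q * (∑ i, U i p * A i q) * (∑ j, V j p * B j q) := by
        refine Finset.sum_congr rfl fun p _ => Finset.sum_congr rfl fun q _ => ?_
        rw [mul_assoc (g p * σ q), Finset.sum_mul_sum, Finset.mul_sum]
        refine Finset.sum_congr rfl fun i _ => ?_
        rw [Finset.mul_sum]
        refine Finset.sum_congr rfl fun j _ => ?_
        ring

lemma minner_UgV_le (hlam : 0 ≤ lam) (U : Matrix (Fin m) (Fin r) ℝ) (g : Fin r → ℝ)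
    (V : Matrix (Fin n) (Fin r) ℝ) (hU : Uᵀ * U = 1) (hV : Vᵀ * V = 1)
    (hg0 : ∀ i, 0 ≤ g i) (hg1 : ∀ i, g i ≤ lam) (Y : Matrix (Fin m) (Fin n) ℝ) :
    minner (U * Matrix.diagonal g * Vᵀ) Y ≤ lam * nnorm Y := by
  obtain ⟨r', A, σ, B, hA, hB, hσ, hY⟩ := exists_svd Y
  have hnY : nnorm Y = ∑ q, σ q := by
    rw [hY]; exact nnorm_UdV A σ B hA hB fun q => le_of_lt (hσ q)
  have hme : minner (U * Matrix.diagonal g * Vᵀ) Y =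
      ∑ p, ∑ q, g p * σ q * ((Uᵀ * A) p q) * ((Vᵀ * B) p q) := by
    rw [hY]; exact minner_expand U g V A σ B
  rw [hme, hnY]
  have key : ∀ q, ∑ p, g p * σ q * ((Uᵀ * A) p q) * ((Vᵀ * B) p q) ≤ lam * σ q := by
    intro q
    have hP := col_sq_sum_le U hU A hA q
    have hQ := col_sq_sum_le V hV B hB q
    have hCS := Finset.sum_mul_sq_le_sq_mul_sq univ (fun p => |(Uᵀ * A) p q|)
      (fun p => |(Vᵀ * B) p q|)
    simp only [sq_abs] at hCS
    have hsum1 : ∑ p, |(Uᵀ * A) p q| * |(Vᵀ * B) p q| ≤ 1 := by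
      have h0 : (0:ℝ) ≤ ∑ p, |(Uᵀ * A) p q| * |(Vᵀ * B) p q| :=
        Finset.sum_nonneg fun p _ => mul_nonneg (abs_nonneg _) (abs_nonneg _)
      nlinarith [hCS, hP, hQ, Finset.sum_nonneg (fun p (_ : p ∈ univ) => sq_nonneg ((Uᵀ * A) p q)),
        Finset.sum_nonneg (fun p (_ : p ∈ univ) => sq_nonneg ((Vᵀ * B) p q))]
    calc ∑ p, g p * σ q * ((Uᵀ * A) p q) * ((Vᵀ * B) p q)
        ≤ ∑ p, lam * σ q * (|(Uᵀ * A) p q| * |(Vᵀ * B) p q|) := by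
          refine Finset.sum_le_sum fun p _ => ?_
          have habs : (Uᵀ * A) p q * ((Vᵀ * B) p q) ≤ |(Uᵀ * A) p q| * |(Vᵀ * B) p q| := by
            rw [← abs_mul]; exact le_abs_self _
          have hgs : 0 ≤ g p * σ q := mul_nonneg (hg0 p) (le_of_lt (hσ q))
          have hls : g p * σ q ≤ lam * σ q :=
            mul_le_mul_of_nonneg_right (hg1 p) (le_of_lt (hσ q))
          have habs' : 0 ≤ |(Uᵀ * A) p q| * |(Vᵀ * B) p q| :=
            mul_nonneg (abs_nonneg _) (abs_nonneg _)
          calc g p * σ q * ((Uᵀ * A) p q) * ((Vᵀ * B) p q)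
              = g p * σ q * (((Uᵀ * A) p q) * ((Vᵀ * B) p q)) := by ring
            _ ≤ g p * σ q * (|(Uᵀ * A) p q| * |(Vᵀ * B) p q|) :=
                mul_le_mul_of_nonneg_left habs hgs
            _ ≤ lam * σ q * (|(Uᵀ * A) p q| * |(Vᵀ * B) p q|) :=
                mul_le_mul_of_nonneg_right hls habs'
      _ = lam * σ q * ∑ p, |(Uᵀ * A) p q| * |(Vᵀ * B) p q| := by rw [Finset.mul_sum]
      _ ≤ lam * σ q * 1 := by
          refine mul_le_mul_of_nonneg_left hsum1 ?_
          exact mul_nonneg hlam (le_of_lt (hσ q))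
      _ = lam * σ q := mul_one _
  calc ∑ p, ∑ q, g p * σ q * ((Uᵀ * A) p q) * ((Vᵀ * B) p q)
      = ∑ q, ∑ p, g p * σ q * ((Uᵀ * A) p q) * ((Vᵀ * B) p q) := Finset.sum_comm
    _ ≤ ∑ q, lam * σ q := Finset.sum_le_sum fun q _ => key q
    _ = lam * ∑ q, σ q := by rw [Finset.mul_sum]

end SoftImpute

noncomputable section
namespace SoftImpute
open Matrix BigOperators Finset

variable {m n r : ℕ} {lam : ℝ}

/-- `S` is the prox of `W`: strong-convexity form of the minimization property. -/
def ProxOK (lam : ℝ) (W S : Matrix (Fin m) (Fin n) ℝ) : Prop :=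
  ∀ Y, frobSq (W - S) / 2 + lam * nnorm S + frobSq (Y - S) / 2 ≤
    frobSq (W - Y) / 2 + lam * nnorm Y

lemma prox_of_svd (hlam : 0 < lam) {W : Matrix (Fin m) (Fin n) ℝ}
    {U : Matrix (Fin m) (Fin r) ℝ} {d : Fin r → ℝ} {V : Matrix (Fin n) (Fin r) ℝ}
    (h : IsSVD W U d V) :
    ProxOK lam W (U * Matrix.diagonal (fun i => max (d i - lam) 0) * Vᵀ) := by
  obtain ⟨hU, hV, hd, hW⟩ := h
  intro Y
  set c : Fin r → ℝ := fun i => max (d i - lam) 0 with hcdef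
  set g : Fin r → ℝ := fun i => min (d i) lam with hgdef
  set S : Matrix (Fin m) (Fin n) ℝ := U * Matrix.diagonal c * Vᵀ with hSdef
  have hWS : W - S = U * Matrix.diagonal g * Vᵀ := by
    rw [hW, hSdef, ← Matrix.sub_mul, ← Matrix.mul_sub, Matrix.diagonal_sub,
      show (fun i => d i - c i) = g from funext fun i => ?_]
    rcases le_or_gt (d i) lam with h1 | h1
    · simp only [Pi.sub_apply, hcdef, hgdef]
      rw [max_eq_right (by linarith), min_eq_left h1, sub_zero]
    · simp only [Pi.sub_apply, hcdef, hgdef]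
      rw [max_eq_left (by linarith), min_eq_right (le_of_lt h1)]
      ring
  have hc0 : ∀ i, 0 ≤ c i := fun i => le_max_right _ _
  have hg0 : ∀ i, 0 ≤ g i := fun i => le_min (le_of_lt (hd i)) (le_of_lt hlam)
  have hg1 : ∀ i, g i ≤ lam := fun i => min_le_right _ _
  have hnS : nnorm S = ∑ i, c i := nnorm_UdV U c V hU hV hc0
  have hGS : minner (W - S) S = lam * ∑ i, c i := by
    rw [hWS, hSdef, minner_UdV_pair U g c V hU hV, Finset.mul_sum]
    refine Finset.sum_congr rfl fun i _ => ?_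
    rcases le_or_gt (d i) lam with h1 | h1
    · simp only [hcdef, hgdef]
      rw [max_eq_right (by linarith), mul_zero, mul_zero]
    · simp only [hcdef, hgdef]
      rw [min_eq_right (le_of_lt h1)]
  have hGY : minner (W - S) Y ≤ lam * nnorm Y := by
    rw [hWS]
    exact minner_UgV_le (le_of_lt hlam) U g V hU hV hg0 hg1 Y
  have hsub : lam * nnorm S + minner (W - S) (Y - S) ≤ lam * nnorm Y := by
    rw [minner_sub_right, hGS, hnS]
    linarith
  have hquad : frobSq (W - Y) = frobSq (W - S) - 2 * minner (W - S) (Y - S) + frobSq (Y - S) := by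
    rw [show W - Y = (W - S) - (Y - S) by abel, frobSq_sub]
  rw [hquad]
  linarith

lemma proxOK_unique {W S S' : Matrix (Fin m) (Fin n) ℝ}
    (h : ProxOK lam W S) (h' : ProxOK lam W S') : S = S' := by
  have h1 := h S'
  have h2 := h' S
  have h3 : frobSq (S' - S) / 2 + frobSq (S - S') / 2 ≤ 0 := by linarith
  have h4 : frobSq (S - S') = 0 := by
    have := frobSq_nonneg (S' - S)
    have := frobSq_nonneg (S - S')
    linarith
  have := frobSq_eq_zero h4
  rwa [sub_eq_zero] at this

lemma exists_proxOK (hlam : 0 < lam) (W : Matrix (Fin m) (Fin n) ℝ) :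
    ∃ S, ProxOK lam W S := by
  obtain ⟨r, U, d, V, h⟩ := exists_svd W
  exact ⟨_, prox_of_svd hlam h⟩

end SoftImpute

noncomputable section
namespace SoftImpute
open Matrix BigOperators Finset

variable {m n : ℕ} {lam : ℝ}

lemma minner_self (A : Matrix (Fin m) (Fin n) ℝ) : minner A A = frobSq A := by
  simp only [minner, frobSq, sq]

lemma minner_sub_left (A B C : Matrix (Fin m) (Fin n) ℝ) :
    minner (A - B) C = minner A C - minner B C := by
  simp only [minner, Matrix.sub_apply, sub_mul, Finset.sum_sub_distrib]

lemma minner_flat (A B : Matrix (Fin m) (Fin n) ℝ) :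
    minner A B = ∑ p : Fin m × Fin n, A p.1 p.2 * B p.1 p.2 := by
  rw [minner, Fintype.sum_prod_type]

lemma frobSq_flat (A : Matrix (Fin m) (Fin n) ℝ) :
    frobSq A = ∑ p : Fin m × Fin n, (A p.1 p.2) ^ 2 := by
  rw [frobSq, Fintype.sum_prod_type]

lemma minner_cs (A B : Matrix (Fin m) (Fin n) ℝ) :
    minner A B ≤ Real.sqrt (frobSq A) * Real.sqrt (frobSq B) := by
  have hCS := Finset.sum_mul_sq_le_sq_mul_sq univ (fun p : Fin m × Fin n => A p.1 p.2)
    (fun p : Fin m × Fin n => B p.1 p.2)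
  rw [← minner_flat, ← frobSq_flat, ← frobSq_flat] at hCS
  calc minner A B ≤ |minner A B| := le_abs_self _
    _ = Real.sqrt ((minner A B) ^ 2) := (Real.sqrt_sq_eq_abs _).symm
    _ ≤ Real.sqrt (frobSq A * frobSq B) := Real.sqrt_le_sqrt hCS
    _ = Real.sqrt (frobSq A) * Real.sqrt (frobSq B) := Real.sqrt_mul (frobSq_nonneg A) _

lemma proxOK_nonexpansive {W W' S S' : Matrix (Fin m) (Fin n) ℝ}
    (h : ProxOK lam W S) (h' : ProxOK lam W' S') :
    frobSq (S - S') ≤ frobSq (W - W') := by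
  have h1 := h S'
  have h2 := h' S
  have e1 : frobSq (W - S') = frobSq (W - S) - 2 * minner (W - S) (S' - S) + frobSq (S' - S) := by
    rw [show W - S' = (W - S) - (S' - S) by abel, frobSq_sub]
  have e2 : frobSq (W' - S) = frobSq (W' - S') - 2 * minner (W' - S') (S - S') + frobSq (S - S') := by
    rw [show W' - S = (W' - S') - (S - S') by abel, frobSq_sub]
  have e3 : minner (W - S) (S' - S) = - minner (W - S) (S - S') := by
    rw [show S' - S = 0 - (S - S') by abel, minner_sub_right]
    simp [minner]
  have hkey : frobSq (S - S') ≤ minner (W - W') (S - S') := by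
    have expand : minner (W - W') (S - S') =
        minner (W - S) (S - S') - minner (W' - S') (S - S') + frobSq (S - S') := by
      rw [← minner_self]
      simp only [minner_sub_left]
      ring
    rw [expand]
    nlinarith [h1, h2, e1, e2, e3]
  have hcs := minner_cs (W - W') (S - S')
  have ha := Real.sq_sqrt (frobSq_nonneg (W - W'))
  have hb := Real.sq_sqrt (frobSq_nonneg (S - S'))
  have ha' := Real.sqrt_nonneg (frobSq (W - W'))
  have hb' := Real.sqrt_nonneg (frobSq (S - S'))
  nlinarith [hkey, hcs, ha, hb, ha', hb']

end SoftImpute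

noncomputable section
namespace SoftImpute
open Matrix BigOperators Finset

variable {m n : ℕ} {lam : ℝ} {Ω : Finset (Fin m × Fin n)}

lemma pO_apply (Y : Matrix (Fin m) (Fin n) ℝ) (i j) :
    pO Ω Y i j = if (i, j) ∈ Ω then Y i j else 0 := rfl

lemma pOc_apply (Y : Matrix (Fin m) (Fin n) ℝ) (i j) :
    pOc Ω Y i j = if (i, j) ∈ Ω then 0 else Y i j := by
  rw [pOc, Matrix.sub_apply, pO_apply]
  by_cases h : (i, j) ∈ Ω <;> simp [h]

lemma pO_sub (A B : Matrix (Fin m) (Fin n) ℝ) : pO Ω (A - B) = pO Ω A - pO Ω B := by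
  ext i j
  simp only [pO_apply, Matrix.sub_apply]
  by_cases h : (i, j) ∈ Ω <;> simp [h]

lemma frobSq_split (A B : Matrix (Fin m) (Fin n) ℝ) :
    frobSq (pO Ω A + pOc Ω B) = frobSq (pO Ω A) + frobSq (pOc Ω B) := by
  simp only [frobSq, ← Finset.sum_add_distrib]
  refine Finset.sum_congr rfl fun i _ => Finset.sum_congr rfl fun j _ => ?_
  simp only [Matrix.add_apply, pO_apply, pOc_apply]
  by_cases h : (i, j) ∈ Ω <;> simp [h]

lemma frobSq_pO_le (A : Matrix (Fin m) (Fin n) ℝ) : frobSq (pO Ω A) ≤ frobSq A := by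
  refine Finset.sum_le_sum fun i _ => Finset.sum_le_sum fun j _ => ?_
  rw [pO_apply]
  by_cases h : (i, j) ∈ Ω <;> simp [h, sq_nonneg]

lemma frobSq_pOc_le (A : Matrix (Fin m) (Fin n) ℝ) : frobSq (pOc Ω A) ≤ frobSq A := by
  refine Finset.sum_le_sum fun i _ => Finset.sum_le_sum fun j _ => ?_
  rw [pOc_apply]
  by_cases h : (i, j) ∈ Ω <;> simp [h, sq_nonneg]

/-- The soft-impute input decomposes against any `Y`. -/
lemma input_decomp (X Zt Y : Matrix (Fin m) (Fin n) ℝ) :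
    pO Ω X + pOc Ω Zt - Y = pO Ω (X - Y) + pOc Ω (Zt - Y) := by
  ext i j
  simp only [Matrix.add_apply, Matrix.sub_apply, pO_apply, pOc_apply]
  by_cases h : (i, j) ∈ Ω <;> simp [h]

lemma input_diff (X A B : Matrix (Fin m) (Fin n) ℝ) :
    (pO Ω X + pOc Ω A) - (pO Ω X + pOc Ω B) = pOc Ω (A - B) := by
  ext i j
  simp only [Matrix.add_apply, Matrix.sub_apply, pO_apply, pOc_apply]
  by_cases h : (i, j) ∈ Ω <;> simp [h]

/-- Flatten a matrix to a Euclidean space vector. -/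
def toE (A : Matrix (Fin m) (Fin n) ℝ) : EuclideanSpace ℝ (Fin m × Fin n) :=
  (WithLp.equiv 2 _).symm (fun p => A p.1 p.2)

lemma toE_sub (A B : Matrix (Fin m) (Fin n) ℝ) : toE (A - B) = toE A - toE B := rfl

lemma norm_toE (A : Matrix (Fin m) (Fin n) ℝ) : ‖toE A‖ = Real.sqrt (frobSq A) := by
  rw [EuclideanSpace.norm_eq, frobSq_flat]
  congr 1
  refine Finset.sum_congr rfl fun p _ => ?_
  rw [Real.norm_eq_abs, sq_abs]
  rfl

lemma norm_toE_sq (A : Matrix (Fin m) (Fin n) ℝ) : ‖toE A‖ ^ 2 = frobSq A := by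
  rw [norm_toE, Real.sq_sqrt (frobSq_nonneg A)]

/-- `toE` as a linear equiv. -/
def toEL : Matrix (Fin m) (Fin n) ℝ ≃ₗ[ℝ] EuclideanSpace ℝ (Fin m × Fin n) where
  toFun := toE
  invFun := fun x => Matrix.of fun i j => x (i, j)
  map_add' := fun _ _ => rfl
  map_smul' := fun _ _ => rfl
  left_inv := fun A => rfl
  right_inv := fun x => rfl

lemma continuous_toE : Continuous (toE (m := m) (n := n)) :=
  LinearMap.continuous_of_finiteDimensional (toEL.toLinearMap)

lemma continuous_fromE : Continuous (toEL (m := m) (n := n)).symm :=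
  LinearMap.continuous_of_finiteDimensional (toEL.symm.toLinearMap)

end SoftImpute

noncomputable section
namespace SoftImpute
open Matrix BigOperators Finset

variable {m n : ℕ} {Ω : Finset (Fin m × Fin n)}

lemma frobSq_sub_comm (A B : Matrix (Fin m) (Fin n) ℝ) : frobSq (A - B) = frobSq (B - A) := by
  rw [show A - B = -(B - A) by abel, frobSq_neg]

lemma pOc_zero : pOc Ω (0 : Matrix (Fin m) (Fin n) ℝ) = 0 := by
  ext i j
  rw [pOc_apply]
  by_cases h : (i, j) ∈ Ω <;> simp [h]

lemma norm_sub_toE (A B : Matrix (Fin m) (Fin n) ℝ) :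
    ‖toE A - toE B‖ = Real.sqrt (frobSq (A - B)) := by
  rw [← toE_sub, norm_toE]

lemma fObj_nonneg (X : Matrix (Fin m) (Fin n) ℝ) {lam : ℝ} (hlam : 0 < lam)
    (A : Matrix (Fin m) (Fin n) ℝ) : 0 ≤ fObj Ω X lam A := by
  have h1 := frobSq_nonneg (pO Ω A - pO Ω X)
  have h2 := nnorm_nonneg A
  have := mul_nonneg (le_of_lt hlam) h2
  rw [fObj]
  linarith

/-- Value of the prox objective at the input-residual decomposition. -/
lemma residual_eq (X Zt : Matrix (Fin m) (Fin n) ℝ) :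
    frobSq (pO Ω X + pOc Ω Zt - Zt) = frobSq (pO Ω Zt - pO Ω X) := by
  rw [input_decomp, sub_self, pOc_zero, add_zero, pO_sub, frobSq_sub_comm]

lemma residual_ge (X Zt Y : Matrix (Fin m) (Fin n) ℝ) :
    frobSq (pO Ω X + pOc Ω Zt - Y) =
      frobSq (pO Ω Y - pO Ω X) + frobSq (pOc Ω (Zt - Y)) := by
  rw [input_decomp, frobSq_split, pO_sub, frobSq_sub_comm]

end SoftImpute

open SoftImpute

/-- convergence of Soft-Impute: the iterates converge to a
minimizer of `f_λ`. -/
theorem soft_impute_converges {m n : ℕ} (Ω : Finset (Fin m × Fin n))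
    (X : Matrix (Fin m) (Fin n) ℝ) (lam : ℝ) (hlam : 0 < lam)
    (Z : ℕ → Matrix (Fin m) (Fin n) ℝ) (h0 : Z 0 = 0)
    (hiter : ∀ k, ∃ (r : ℕ) (U : Matrix (Fin m) (Fin r) ℝ) (d : Fin r → ℝ)
        (V : Matrix (Fin n) (Fin r) ℝ),
      IsSVD (pO Ω X + pOc Ω (Z k)) U d V ∧
      Z (k + 1) = U * Matrix.diagonal (fun i => max (d i - lam) 0) * Vᵀ) :
    ∃ Zinf : Matrix (Fin m) (Fin n) ℝ,
      Filter.Tendsto Z Filter.atTop (nhds Zinf) ∧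
      ∀ Y : Matrix (Fin m) (Fin n) ℝ, fObj Ω X lam Zinf ≤ fObj Ω X lam Y := by
    classical
  set gmap : Matrix (Fin m) (Fin n) ℝ → Matrix (Fin m) (Fin n) ℝ :=
    fun A => pO Ω X + pOc Ω A with hgmap
  -- each iterate is the prox of the previous input
  have hprox : ∀ k, ProxOK lam (gmap (Z k)) (Z (k + 1)) := by
    intro k
    obtain ⟨r, U, d, V, hsvd, hZk⟩ := hiter k
    rw [hZk]
    exact prox_of_svd hlam hsvd
  -- descent property
  have hdescent : ∀ k,
      fObj Ω X lam (Z (k + 1)) + frobSq (Z k - Z (k + 1)) / 2 ≤ fObj Ω X lam (Z k) := by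
    intro k
    have h := hprox k (Z k)
    have eR : frobSq (gmap (Z k) - Z k) = frobSq (pO Ω (Z k) - pO Ω X) := residual_eq X (Z k)
    have eL : frobSq (gmap (Z k) - Z (k + 1)) =
        frobSq (pO Ω (Z (k + 1)) - pO Ω X) + frobSq (pOc Ω (Z k - Z (k + 1))) :=
      residual_ge X (Z k) (Z (k + 1))
    have hnn := frobSq_nonneg (pOc Ω (Z k - Z (k + 1)))
    rw [eR, eL] at h
    rw [fObj, fObj]
    rw [frobSq_sub_comm (Z k) (Z (k + 1))] at h ⊢
    linarith
  set B0 : ℝ := fObj Ω X lam (Z 0) with hB0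
  have hf0 : ∀ A, 0 ≤ fObj Ω X lam A := fObj_nonneg X hlam
  have hfle : ∀ k, fObj Ω X lam (Z k) ≤ B0 := by
    intro k
    induction k with
    | zero => exact le_refl _
    | succ k ih =>
      have := hdescent k
      have := frobSq_nonneg (Z k - Z (k + 1))
      linarith
  -- boundedness of the iterates
  have hnormbound : ∀ k, ‖toE (Z k)‖ ≤ B0 / lam := by
    intro k
    have h1 : lam * nnorm (Z k) ≤ B0 := by
      have := hfle k
      have h2 := frobSq_nonneg (pO Ω (Z k) - pO Ω X)
      rw [fObj] at this
      linarith
    have h3 : nnorm (Z k) ≤ B0 / lam := by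
      rw [le_div_iff₀ hlam]
      linarith [h1]
    have h4 : ‖toE (Z k)‖ ≤ nnorm (Z k) := by
      rw [norm_toE]
      calc Real.sqrt (frobSq (Z k)) ≤ Real.sqrt (nnorm (Z k) ^ 2) :=
            Real.sqrt_le_sqrt (frobSq_le_nnorm_sq (Z k))
        _ = nnorm (Z k) := by rw [Real.sqrt_sq (nnorm_nonneg (Z k))]
    linarith
  -- extract a convergent subsequence
  obtain ⟨zbar, _, φ, hφmono, hφtend⟩ :=
    (isCompact_closedBall (0 : EuclideanSpace ℝ (Fin m × Fin n)) (B0 / lam)).tendsto_subseq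
      (fun k => mem_closedBall_zero_iff.mpr (hnormbound k))
  set Zbar : Matrix (Fin m) (Fin n) ℝ := toEL.symm zbar with hZbar
  have htoEZbar : toE Zbar = zbar := toEL.apply_symm_apply zbar
  -- asymptotic regularity
  set δ : ℕ → ℝ := fun k => frobSq (Z k - Z (k + 1)) with hδ
  have hδ0 : ∀ k, 0 ≤ δ k := fun k => frobSq_nonneg _
  have hδsummable : Summable (fun k => δ k / 2) := by
    refine summable_of_sum_range_le (c := B0) (fun k => div_nonneg (hδ0 k) (by norm_num)) (fun N => ?_)
    have htel : ∑ k ∈ Finset.range N, (fObj Ω X lam (Z k) - fObj Ω X lam (Z (k + 1))) =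
        fObj Ω X lam (Z 0) - fObj Ω X lam (Z N) := Finset.sum_range_sub' _ N
    have hsum : ∑ k ∈ Finset.range N, δ k / 2 ≤
        ∑ k ∈ Finset.range N, (fObj Ω X lam (Z k) - fObj Ω X lam (Z (k + 1))) := by
      refine Finset.sum_le_sum fun k _ => ?_
      have := hdescent k
      linarith
    rw [htel] at hsum
    have := hf0 (Z N)
    linarith
  have hδtend : Filter.Tendsto δ Filter.atTop (nhds 0) := by
    have h1 := hδsummable.tendsto_atTop_zero
    have h2 : Filter.Tendsto (fun k => 2 * (δ k / 2)) Filter.atTop (nhds (2 * 0)) :=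
      h1.const_mul 2
    have h3 : (fun k => 2 * (δ k / 2)) = δ := funext fun k => by ring
    rw [h3] at h2
    simpa using h2
  -- the prox at the limit input
  obtain ⟨Sbar, hSbar⟩ := exists_proxOK hlam (gmap Zbar)
  -- one-step nonexpansiveness towards (gmap Zbar, Sbar)
  have hne : ∀ k, frobSq (Z (k + 1) - Sbar) ≤ frobSq (Z k - Zbar) := by
    intro k
    have h1 := proxOK_nonexpansive (hprox k) hSbar
    have h2 : gmap (Z k) - gmap Zbar = pOc Ω (Z k - Zbar) := input_diff X (Z k) Zbar
    rw [h2] at h1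
    exact le_trans h1 (frobSq_pOc_le _)
  -- subsequence convergence in norm
  have haux : Filter.Tendsto (fun k => ‖toE (Z (φ k)) - toE Zbar‖) Filter.atTop (nhds 0) := by
    rw [htoEZbar]
    exact (tendsto_iff_norm_sub_tendsto_zero.mp hφtend)
  have hbaux : Filter.Tendsto (fun k => Real.sqrt (δ (φ k))) Filter.atTop (nhds 0) := by
    have h1 : Filter.Tendsto (fun k => δ (φ k)) Filter.atTop (nhds 0) :=
      hδtend.comp hφmono.tendsto_atTop
    have h2 := (Real.continuous_sqrt.tendsto 0).comp h1
    simpa [Function.comp_def] using h2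
  -- Sbar = Zbar
  have hfixeq : Sbar = Zbar := by
    have hineq : ∀ k, ‖toE Zbar - toE Sbar‖ ≤
        ‖toE (Z (φ k)) - toE Zbar‖ + Real.sqrt (δ (φ k)) + ‖toE (Z (φ k)) - toE Zbar‖ := by
      intro k
      have t1 : ‖toE Zbar - toE Sbar‖ ≤ ‖toE Zbar - toE (Z (φ k + 1))‖ +
          ‖toE (Z (φ k + 1)) - toE Sbar‖ := norm_sub_le_norm_sub_add_norm_sub _ _ _
      have t2 : ‖toE Zbar - toE (Z (φ k + 1))‖ ≤ ‖toE Zbar - toE (Z (φ k))‖ +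
          ‖toE (Z (φ k)) - toE (Z (φ k + 1))‖ := norm_sub_le_norm_sub_add_norm_sub _ _ _
      have t3 : ‖toE (Z (φ k)) - toE (Z (φ k + 1))‖ = Real.sqrt (δ (φ k)) := by
        rw [norm_sub_toE]
      have t4 : ‖toE (Z (φ k + 1)) - toE Sbar‖ ≤ ‖toE (Z (φ k)) - toE Zbar‖ := by
        rw [norm_sub_toE, norm_sub_toE]
        exact Real.sqrt_le_sqrt (hne (φ k))
      have t5 : ‖toE Zbar - toE (Z (φ k))‖ = ‖toE (Z (φ k)) - toE Zbar‖ := norm_sub_rev _ _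
      rw [t3] at t2
      rw [t5] at t2
      linarith
    have hlim : Filter.Tendsto
        (fun k => ‖toE (Z (φ k)) - toE Zbar‖ + Real.sqrt (δ (φ k)) + ‖toE (Z (φ k)) - toE Zbar‖)
        Filter.atTop (nhds 0) := by
      have := (haux.add hbaux).add haux
      simpa using this
    have hle : ‖toE Zbar - toE Sbar‖ ≤ 0 := ge_of_tendsto' hlim hineq
    have heq0 : toE Zbar - toE Sbar = 0 :=
      norm_eq_zero.mp (le_antisymm hle (norm_nonneg _))
    have : toE Zbar = toE Sbar := by rwa [sub_eq_zero] at heq0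
    have hinj : Function.Injective (toE (m := m) (n := n)) := toEL.injective
    exact (hinj this).symm
  rw [hfixeq] at hSbar hne
  -- Fejér monotone convergence of the full sequence
  set β : ℕ → ℝ := fun k => ‖toE (Z k) - toE Zbar‖ with hβ
  have hβanti : Antitone β := by
    refine antitone_nat_of_succ_le fun k => ?_
    rw [hβ]
    simp only
    rw [norm_sub_toE, norm_sub_toE]
    exact Real.sqrt_le_sqrt (hne k)
  have hβ0 : ∀ k, 0 ≤ β k := fun k => norm_nonneg _
  have hβφ : Filter.Tendsto (β ∘ φ) Filter.atTop (nhds 0) := haux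
  have hβtend : Filter.Tendsto β Filter.atTop (nhds 0) := by
    have hbdd : BddBelow (Set.range β) := ⟨0, fun x ⟨k, hk⟩ => hk ▸ hβ0 k⟩
    have h1 := tendsto_atTop_ciInf hβanti hbdd
    have h2 : Filter.Tendsto (β ∘ φ) Filter.atTop (nhds (⨅ k, β k)) :=
      h1.comp hφmono.tendsto_atTop
    have h3 : (⨅ k, β k) = 0 := tendsto_nhds_unique h2 hβφ
    rwa [h3] at h1
  have hZtoE : Filter.Tendsto (fun k => toE (Z k)) Filter.atTop (nhds (toE Zbar)) :=
    tendsto_iff_norm_sub_tendsto_zero.mpr hβtend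
  have hZtend : Filter.Tendsto Z Filter.atTop (nhds Zbar) := by
    have h1 := (continuous_fromE.tendsto (toE Zbar)).comp hZtoE
    have h2 : ∀ k, toEL.symm (toE (Z k)) = Z k := fun k => toEL.symm_apply_apply (Z k)
    have h3 : toEL.symm (toE Zbar) = Zbar := toEL.symm_apply_apply Zbar
    simpa [Function.comp_def, h2, h3] using h1
  -- minimality
  refine ⟨Zbar, hZtend, fun Y => ?_⟩
  have h := hSbar Y
  have eL : frobSq (gmap Zbar - Zbar) = frobSq (pO Ω Zbar - pO Ω X) := residual_eq X Zbar
  have eR : frobSq (gmap Zbar - Y) =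
      frobSq (pO Ω Y - pO Ω X) + frobSq (pOc Ω (Zbar - Y)) := residual_ge X Zbar Y
  have hc : frobSq (pOc Ω (Zbar - Y)) ≤ frobSq (Zbar - Y) := frobSq_pOc_le _
  have hsc : frobSq (Zbar - Y) = frobSq (Y - Zbar) := frobSq_sub_comm _ _
  rw [eL, eR] at h
  rw [fObj, fObj]
  linarith
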